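/- arXiv:1406.6156 — 6 statements merged into one kernel-verified Lean document; each statement's English description precedes it below -/
import Mathlib

section
/- In a unital Banach *-algebra with continuous involution, every positive linear functional f satisfies f(b*a*ab) ≤ r(a*a)·f(b*b) for all a, b, where r denotes the spectral radius. -/
open scoped ComplexOrder
open scoped Topology
open Filter Finset

set_option linter.unusedSectionVars false

/-- Coefficients of the power series of `√(1 - t)`, defined by recursion so that the
Cauchy-product identity holds by construction. -/
noncomputable def sqrtCoef : ℕ → ℝ
  | 0 => 1
  | 1 => -(1/2)
  | (n+2) => -(1/2) * ∑ i ∈ (Finset.Ico 1 (n+2)).attach,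
      sqrtCoef i.1 * sqrtCoef (n+2-i.1)
  decreasing_by
  · exact (Finset.mem_Ico.mp i.2).2
  · have h1 := (Finset.mem_Ico.mp i.2).1
    omega

lemma sqrtCoef_rec (n : ℕ) (hn : 2 ≤ n) :
    sqrtCoef n = -(1/2) * ∑ i ∈ Finset.Ico 1 n, sqrtCoef i * sqrtCoef (n-i) := by
  obtain ⟨m, rfl⟩ : ∃ m, n = m + 2 := ⟨n - 2, by omega⟩
  rw [sqrtCoef]
  congr 1
  rw [← Finset.sum_attach (Finset.Ico 1 (m+2)) (fun i => sqrtCoef i * sqrtCoef (m+2-i))]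

lemma sqrtCoef_nonpos {n : ℕ} (hn : 1 ≤ n) : sqrtCoef n ≤ 0 := by
  induction n using Nat.strong_induction_on with
  | _ n ih =>
    match n, hn with
    | 1, _ => rw [sqrtCoef]; norm_num
    | (m+2), _ =>
      rw [sqrtCoef_rec (m+2) (by omega)]
      have : 0 ≤ ∑ i ∈ Finset.Ico 1 (m+2), sqrtCoef i * sqrtCoef (m+2-i) := by
        apply Finset.sum_nonneg
        intro i hi
        rw [Finset.mem_Ico] at hi
        have h1 := ih i (by omega) (by omega)
        have h2 := ih (m+2-i) (by omega) (by omega)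
        nlinarith
      nlinarith


lemma sqrtCoef_zero : sqrtCoef 0 = 1 := by rw [sqrtCoef]

lemma sqrtCoef_one : sqrtCoef 1 = -(1/2) := by rw [sqrtCoef]

lemma sqrtCoef_partial_sum (N : ℕ) :
    ∑ n ∈ Finset.Ico 1 (N+1), (-sqrtCoef n) ≤ 1 := by
  induction N with
  | zero => simp
  | succ N ih =>
    have hsplit : ∑ n ∈ Finset.Ico 1 (N+2), (-sqrtCoef n)
        = (-sqrtCoef 1) + ∑ m ∈ Finset.Ico 2 (N+2), (-sqrtCoef m) := by
      rw [← Finset.sum_Ico_consecutive _ (by omega : (1:ℕ) ≤ 2) (by omega : 2 ≤ N+2)]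
      simp
    have hm : ∀ m ∈ Finset.Ico 2 (N+2), (-sqrtCoef m)
        = (1/2) * ∑ i ∈ Finset.Ico 1 m, (-sqrtCoef i) * (-sqrtCoef (m-i)) := by
      intro m hm
      rw [Finset.mem_Ico] at hm
      rw [sqrtCoef_rec m hm.1]
      have : ∑ i ∈ Finset.Ico 1 m, sqrtCoef i * sqrtCoef (m-i)
          = ∑ i ∈ Finset.Ico 1 m, (-sqrtCoef i) * (-sqrtCoef (m-i)) :=
        Finset.sum_congr rfl (fun i _ => by ring)
      rw [this]; ring
    rw [hsplit, Finset.sum_congr rfl hm, sqrtCoef_one]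
    have key : ∑ m ∈ Finset.Ico 2 (N+2), ∑ i ∈ Finset.Ico 1 m,
          (-sqrtCoef i) * (-sqrtCoef (m-i))
        ≤ (∑ n ∈ Finset.Ico 1 (N+1), (-sqrtCoef n)) *
          (∑ n ∈ Finset.Ico 1 (N+1), (-sqrtCoef n)) := by
      set w : ℕ → ℝ := fun n => -sqrtCoef n with hw
      have hwn : ∀ n, 1 ≤ n → 0 ≤ w n := fun n hn => neg_nonneg.mpr (sqrtCoef_nonpos hn)
      have e1 : ∑ m ∈ Finset.Ico 2 (N+2), ∑ i ∈ Finset.Ico 1 m, w i * w (m-i)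
          = ∑ x ∈ (Finset.Ico 2 (N+2)).sigma (fun m => Finset.Ico 1 m),
              w x.2 * w (x.1 - x.2) :=
        (Finset.sum_sigma (Finset.Ico 2 (N+2)) (fun m => Finset.Ico 1 m) (fun x => w x.2 * w (x.1 - x.2))).symm
      have e2 : ∑ x ∈ (Finset.Ico 2 (N+2)).sigma (fun m => Finset.Ico 1 m),
              w x.2 * w (x.1 - x.2)
          = ∑ p ∈ ((Finset.Ico 2 (N+2)).sigma (fun m => Finset.Ico 1 m)).image
              (fun x => (x.2, x.1 - x.2)), w p.1 * w p.2 := by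
        rw [Finset.sum_image]
        intro x hx y hy h
        simp only [Finset.mem_coe, Finset.mem_sigma, Finset.mem_Ico] at hx hy
        have h1 : x.2 = y.2 := congrArg Prod.fst h
        have h2 : x.1 - x.2 = y.1 - y.2 := congrArg Prod.snd h
        have : x.1 = y.1 := by omega
        exact Sigma.ext this (heq_of_eq h1)
      have e3 : ((Finset.Ico 2 (N+2)).sigma (fun m => Finset.Ico 1 m)).image
              (fun x => (x.2, x.1 - x.2))
            ⊆ (Finset.Ico 1 (N+1)) ×ˢ (Finset.Ico 1 (N+1)) := by
        intro p hp
        simp only [Finset.mem_image, Finset.mem_sigma, Finset.mem_Ico] at hp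
        obtain ⟨x, ⟨hx1, hx2⟩, rfl⟩ := hp
        simp only [Finset.mem_product, Finset.mem_Ico]
        omega
      have e4 : ∑ p ∈ ((Finset.Ico 2 (N+2)).sigma (fun m => Finset.Ico 1 m)).image
              (fun x => (x.2, x.1 - x.2)), w p.1 * w p.2
          ≤ ∑ p ∈ (Finset.Ico 1 (N+1)) ×ˢ (Finset.Ico 1 (N+1)), w p.1 * w p.2 := by
        apply Finset.sum_le_sum_of_subset_of_nonneg e3
        intro p hp _
        simp only [Finset.mem_product, Finset.mem_Ico] at hp
        exact mul_nonneg (hwn _ hp.1.1) (hwn _ hp.2.1)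
      have e5 : ∑ p ∈ (Finset.Ico 1 (N+1)) ×ˢ (Finset.Ico 1 (N+1)), w p.1 * w p.2
          = (∑ n ∈ Finset.Ico 1 (N+1), w n) * (∑ n ∈ Finset.Ico 1 (N+1), w n) := by
        rw [Finset.sum_mul_sum]
        rw [Finset.sum_product]
      rw [e1, e2]; rw [e5] at e4; exact e4
    have hhalf : ∑ m ∈ Finset.Ico 2 (N+2), (1/2 : ℝ) * ∑ i ∈ Finset.Ico 1 m,
          (-sqrtCoef i) * (-sqrtCoef (m-i))
        = (1/2) * ∑ m ∈ Finset.Ico 2 (N+2), ∑ i ∈ Finset.Ico 1 m,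
          (-sqrtCoef i) * (-sqrtCoef (m-i)) := by rw [Finset.mul_sum]
    rw [hhalf]
    have Tnn : 0 ≤ ∑ n ∈ Finset.Ico 1 (N+1), (-sqrtCoef n) :=
      Finset.sum_nonneg (fun n hn => neg_nonneg.mpr (sqrtCoef_nonpos (Finset.mem_Ico.mp hn).1))
    nlinarith [key, ih, Tnn]

lemma sqrtCoef_antidiagonal (n : ℕ) :
    ∑ p ∈ Finset.HasAntidiagonal.antidiagonal n, sqrtCoef p.1 * sqrtCoef p.2
      = if n = 0 then 1 else if n = 1 then -1 else 0 := by
  rw [Finset.Nat.sum_antidiagonal_eq_sum_range_succ_mk]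
  match n with
  | 0 => simp [sqrtCoef_zero]
  | 1 => simp [Finset.sum_range_succ, sqrtCoef_zero, sqrtCoef_one]; norm_num
  | (m+2) =>
    have h2 : 2 ≤ m + 2 := by omega
    rw [Finset.range_eq_Ico,
      ← Finset.sum_Ico_consecutive _ (by omega : (0:ℕ) ≤ 1) (by omega : 1 ≤ m+2+1),
      Finset.sum_Ico_succ_top (by omega : (1:ℕ) ≤ m+2)]
    have h0 : ∑ i ∈ Finset.Ico 0 1, sqrtCoef i * sqrtCoef (m+2-i) = sqrtCoef (m+2) := by
      simp [sqrtCoef_zero]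
    have hn : sqrtCoef (m+2) * sqrtCoef (m+2-(m+2)) = sqrtCoef (m+2) := by
      simp [sqrtCoef_zero]
    have hmid := sqrtCoef_rec (m+2) h2
    rw [h0, hn]
    have : ∑ i ∈ Finset.Ico 1 (m+2), sqrtCoef i * sqrtCoef (m+2-i) = -2 * sqrtCoef (m+2) := by
      nlinarith [hmid]
    rw [this]
    simp
    ring

lemma sqrtCoef_abs_sum (N : ℕ) : ∑ n ∈ Finset.range N, |sqrtCoef n| ≤ 2 := by
  match N with
  | 0 => simp
  | (N+1) =>
    rw [Finset.range_eq_Ico,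
      ← Finset.sum_Ico_consecutive _ (by omega : (0:ℕ) ≤ 1) (by omega : 1 ≤ N+1)]
    have h0 : ∑ n ∈ Finset.Ico 0 1, |sqrtCoef n| = 1 := by simp [sqrtCoef_zero]
    have h1 : ∑ n ∈ Finset.Ico 1 (N+1), |sqrtCoef n| ≤ 1 := by
      refine le_trans (le_of_eq ?_) (sqrtCoef_partial_sum N)
      exact Finset.sum_congr rfl fun i hi =>
        abs_of_nonpos (sqrtCoef_nonpos (Finset.mem_Ico.mp hi).1)
    linarith

lemma sqrtCoef_abs_summable : Summable (fun n => |sqrtCoef n|) :=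
  summable_of_sum_range_le (fun n => abs_nonneg _) sqrtCoef_abs_sum

/-- Square roots of `1 - x` for self-adjoint `x` of norm `< 1` in a Banach star algebra. -/
lemma exists_sqrt_one_sub {A : Type*} [NormedRing A] [NormedAlgebra ℂ A] [CompleteSpace A]
    [StarRing A] [ContinuousStar A] [StarModule ℂ A]
    (x : A) (hx : ‖x‖ < 1) (hsa : star x = x) :
    ∃ s : A, star s = s ∧ s * s = 1 - x := by
  set g : ℕ → A := fun n => (sqrtCoef n : ℂ) • x ^ n with hg
  have hnorm : ∀ n, ‖g n‖ ≤ (‖(1:A)‖ + 1) * |sqrtCoef n| := by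
    intro n
    match n with
    | 0 => simp [hg, norm_smul, sqrtCoef_zero]
    | (n+1) =>
      have hxn : ‖x ^ (n+1)‖ ≤ 1 := by
        calc ‖x ^ (n+1)‖ ≤ ‖x‖ ^ (n+1) := norm_pow_le' x (Nat.succ_pos n)
          _ ≤ 1 := pow_le_one₀ (norm_nonneg x) hx.le
      calc ‖g (n+1)‖ = ‖((sqrtCoef (n+1) : ℂ))‖ * ‖x ^ (n+1)‖ := norm_smul _ _
        _ ≤ |sqrtCoef (n+1)| * 1 := by
            apply mul_le_mul _ hxn (norm_nonneg _) (abs_nonneg _)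
            simp [Complex.norm_real]
        _ ≤ (‖(1:A)‖ + 1) * |sqrtCoef (n+1)| := by nlinarith [abs_nonneg (sqrtCoef (n+1)), norm_nonneg (1:A)]
  have hsummable : Summable (fun n => ‖g n‖) := by
    apply Summable.of_nonneg_of_le (fun n => norm_nonneg _) hnorm
    exact (sqrtCoef_abs_summable.mul_left _)
  refine ⟨∑' n, g n, ?_, ?_⟩
  · rw [tsum_star]
    apply tsum_congr
    intro n
    rw [hg]
    simp only [star_smul, star_pow, hsa, Complex.star_def, Complex.conj_ofReal]
  · rw [tsum_mul_tsum_eq_tsum_sum_antidiagonal_of_summable_norm hsummable hsummable]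
    have hterm : ∀ n, ∑ p ∈ Finset.HasAntidiagonal.antidiagonal n, g p.1 * g p.2
        = ((if n = 0 then 1 else if n = 1 then -1 else 0 : ℝ) : ℂ) • x ^ n := by
      intro n
      have : ∀ p ∈ Finset.HasAntidiagonal.antidiagonal n, g p.1 * g p.2
          = ((sqrtCoef p.1 * sqrtCoef p.2 : ℝ) : ℂ) • x ^ n := by
        intro p hp
        rw [Finset.HasAntidiagonal.mem_antidiagonal] at hp
        rw [hg]
        simp only [smul_mul_smul_comm, ← pow_add, hp, Complex.ofReal_mul]
      rw [Finset.sum_congr rfl this, ← Finset.sum_smul]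
      congr 1
      rw [← Complex.ofReal_sum]
      rw [sqrtCoef_antidiagonal n]
    rw [tsum_congr hterm]
    rw [tsum_eq_sum (s := {0, 1}) (by intro n hn; simp at hn; simp [hn.1, hn.2])]
    simp [sub_eq_add_neg]

section main
variable {A : Type*} [NormedRing A] [NormedAlgebra ℂ A] [CompleteSpace A]
    [StarRing A] [ContinuousStar A] [StarModule ℂ A]
    (f : A →ₗ[ℂ] ℂ) (hf : ∀ a : A, 0 ≤ f (star a * a))

include hf

lemma pos_re (y : A) (b : A) : 0 ≤ (f (star b * (star y * y) * b)).re := by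
  have h := hf (y * b)
  have : star (y * b) * (y * b) = star b * (star y * y) * b := by
    rw [star_mul]; simp [mul_assoc]
  rw [this] at h
  exact (Complex.le_def.mp h).1

lemma norm_bound (b h : A) (hsa : star h = h) {t : ℝ} (ht : ‖h‖ < t) :
    (f (star b * h * b)).re ≤ t * (f (star b * b)).re := by
  have ht0 : 0 < t := lt_of_le_of_lt (norm_nonneg h) ht
  set x : A := ((t⁻¹ : ℝ) : ℂ) • h with hx
  have hxn : ‖x‖ < 1 := by
    rw [hx, norm_smul]
    simp only [Complex.norm_real, Real.norm_eq_abs, abs_of_pos (inv_pos.mpr ht0)]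
    rw [inv_mul_lt_iff₀ ht0, mul_one]
    exact ht
  have hxsa : star x = x := by
    rw [hx, star_smul, hsa, Complex.star_def, Complex.conj_ofReal]
  obtain ⟨s, hss, hsq⟩ := exists_sqrt_one_sub x hxn hxsa
  have key := pos_re f hf s b
  rw [hss, hsq] at key
  have expand : star b * (1 - x) * b
      = star b * b - ((t⁻¹ : ℝ) : ℂ) • (star b * h * b) := by
    rw [hx, mul_sub, sub_mul, mul_one, mul_smul_comm, smul_mul_assoc]
  rw [expand, map_sub, map_smul] at key
  have : (f (star b * b) - ((t⁻¹:ℝ):ℂ) • f (star b * h * b)).re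
      = (f (star b * b)).re - t⁻¹ * (f (star b * h * b)).re := by
    simp [Complex.sub_re, Complex.smul_re]
  rw [this] at key
  rw [sub_nonneg] at key
  exact (inv_mul_le_iff₀ ht0).mp key

lemma cauchy_schwarz (b h : A) (hsa : star h = h) :
    ((f (star b * h * b)).re) ^ 2
      ≤ (f (star b * b)).re * (f (star b * (h * h) * b)).re := by
  set G := (f (star b * b)).re
  set r := (f (star b * h * b)).re
  set v := (f (star b * (h * h) * b)).re
  have quad : ∀ lam : ℝ, 0 ≤ G * (lam * lam) + (-2 * r) * lam + v := by
    intro lam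
    set y : A := h - ((lam : ℝ) : ℂ) • 1 with hy
    have hysa : star y = y := by
      rw [hy, star_sub, hsa, star_smul, star_one, Complex.star_def, Complex.conj_ofReal]
    have key := pos_re f hf y b
    rw [hysa] at key
    have expand : star b * (y * y) * b
        = star b * (h * h) * b - ((lam:ℝ):ℂ) • (star b * h * b)
          - ((lam:ℝ):ℂ) • (star b * h * b) + (((lam:ℝ):ℂ) * ((lam:ℝ):ℂ)) • (star b * b) := by
      rw [hy]
      simp only [mul_sub, sub_mul, smul_mul_assoc, mul_smul_comm, mul_one, one_mul, smul_smul]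
      module
    rw [expand] at key
    simp only [map_add, map_sub, map_smul, smul_eq_mul] at key
    have hre : (f (star b * (h*h) * b) - ((lam:ℝ):ℂ) * f (star b * h * b)
        - ((lam:ℝ):ℂ) * f (star b * h * b)
        + (((lam:ℝ):ℂ) * ((lam:ℝ):ℂ)) * f (star b * b)).re
        = v - lam * r - lam * r + (lam * lam) * G := by
      simp [Complex.add_re, Complex.sub_re, Complex.mul_re]
      rfl
    rw [hre] at key
    nlinarith [key]
  have hd := discrim_le_zero quad
  rw [discrim] at hd
  nlinarith [hd]

end main

/-- In a unital Banach `*`-algebra with continuous involution, every positive linear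
functional `f` satisfies `f (b⋆ a⋆ a b) ≤ r (a⋆ a) · f (b⋆ b)`, where `r` denotes the
spectral radius. -/
theorem positive_functional_spectralRadius_bound
    {A : Type*} [NormedRing A] [NormedAlgebra ℂ A] [CompleteSpace A]
    [StarRing A] [ContinuousStar A] [StarModule ℂ A]
    (f : A →ₗ[ℂ] ℂ) (hf : ∀ a : A, 0 ≤ f (star a * a)) :
    ∀ a b : A, (f (star b * (star a * a) * b)).re ≤
      (spectralRadius ℂ (star a * a)).toReal * (f (star b * b)).re := by
  intro a b
  set h : A := star a * a with hh
  have hsa : star h = h := by rw [hh, star_mul, star_star]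
  have hpow : ∀ k : ℕ, star (h ^ k) = h ^ k := fun k => by rw [star_pow, hsa]
  set G : ℝ := (f (star b * b)).re with hG
  set r : ℝ := (f (star b * h * b)).re with hr
  set R : ℝ := (spectralRadius ℂ h).toReal with hR
  have hG0 : 0 ≤ G := (Complex.le_def.mp (hf b)).1
  have hR0 : 0 ≤ R := ENNReal.toReal_nonneg
  rcases le_or_gt r 0 with hr0 | hr0
  · exact hr0.trans (mul_nonneg hR0 hG0)
  -- the case G = 0 : then r = 0 by Cauchy-Schwarz, contradiction with r > 0
  rcases eq_or_lt_of_le hG0 with hGz | hGpos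
  · exfalso
    have cs1 := cauchy_schwarz f hf b h hsa
    rw [← hG, ← hr, ← hGz, zero_mul] at cs1
    nlinarith [cs1, hr0]
  -- closed norm bound
  have normBound' : ∀ k : ℕ, (f (star b * h ^ k * b)).re ≤ ‖h ^ k‖ * G := by
    intro k
    apply le_of_forall_pos_le_add
    intro ε hε
    have ht : ‖h ^ k‖ < ‖h ^ k‖ + ε / G := lt_add_of_pos_right _ (div_pos hε hGpos)
    have := norm_bound f hf b (h ^ k) (hpow k) ht
    rw [← hG] at this
    calc (f (star b * h ^ k * b)).re ≤ (‖h ^ k‖ + ε / G) * G := this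
      _ = ‖h ^ k‖ * G + ε := by field_simp
  -- iterated Cauchy-Schwarz
  have iter : ∀ n : ℕ, r ^ (2 ^ n) * G ≤ G ^ (2 ^ n) * (f (star b * h ^ (2 ^ n) * b)).re := by
    intro n
    induction n with
    | zero => simp [mul_comm, pow_one]; exact le_rfl
    | succ n ih =>
      set k := 2 ^ n with hk
      have hk1 : 1 ≤ k := Nat.one_le_two_pow
      set u : ℝ := (f (star b * h ^ k * b)).re with hu
      set u' : ℝ := (f (star b * h ^ (2 ^ (n+1)) * b)).re with hu'
      have hu0 : 0 ≤ u := by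
        rcases eq_or_lt_of_le hk1 with h1 | h1
        · rw [hu, ← h1, pow_one, ← hr]; exact hr0.le
        · obtain ⟨m, hm1, _⟩ : ∃ m, k = m + m ∧ 1 ≤ m := by
            refine ⟨2 ^ (n-1), ?_, Nat.one_le_two_pow⟩
            have hn0 : n ≠ 0 := by rintro rfl; simp [hk] at h1
            rw [hk, ← two_mul, ← pow_succ']
            congr 1
            omega
          rw [hu, hm1, pow_add]
          have := pos_re f hf (h ^ m) b
          rwa [hpow m] at this
      have cs := cauchy_schwarz f hf b (h ^ k) (hpow k)
      rw [← pow_add, ← hG, ← hu] at cs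
      have hkk : k + k = 2 ^ (n+1) := by rw [hk, ← two_mul, ← pow_succ']
      rw [hkk, ← hu'] at cs
      have sq : (r ^ k * G) ^ 2 ≤ (G ^ k * u) ^ 2 :=
        pow_le_pow_left₀ (by positivity) ih 2
      have main : (r ^ (2 ^ (n+1)) * G) * G ≤ (G ^ (2 ^ (n+1)) * u') * G := by
        have e1 : (r ^ (2 ^ (n+1)) * G) * G = (r ^ k * G) ^ 2 := by
          rw [← hkk]; ring
        rw [e1]
        calc (r ^ k * G) ^ 2 ≤ (G ^ k * u) ^ 2 := sq
          _ = G ^ (k + k) * u ^ 2 := by ring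
          _ ≤ G ^ (k + k) * (G * u') := mul_le_mul_of_nonneg_left cs (by positivity)
          _ = (G ^ (k + k) * u') * G := by ring
          _ = (G ^ (2 ^ (n+1)) * u') * G := by rw [hkk]
      exact le_of_mul_le_mul_right main hGpos
  -- combine with the norm bound
  have bound : ∀ n : ℕ, (r / G) ^ (2 ^ n) ≤ ‖h ^ (2 ^ n)‖ := by
    intro n
    have b1 := (iter n).trans (mul_le_mul_of_nonneg_left (normBound' (2 ^ n)) (by positivity))
    have hGk : (0:ℝ) < G ^ (2 ^ n) := by positivity
    rw [div_pow, div_le_iff₀ hGk]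
    calc r ^ (2 ^ n) = (r ^ (2 ^ n) * G) / G := by field_simp
      _ ≤ (G ^ (2 ^ n) * (‖h ^ (2 ^ n)‖ * G)) / G := by gcongr
      _ = ‖h ^ (2 ^ n)‖ * G ^ (2 ^ n) := by field_simp
  -- take 2^n-th roots
  have key_n : ∀ n : ℕ, r / G ≤ ‖h ^ (2 ^ n)‖ ^ ((1:ℝ) / ((2 ^ n : ℕ) : ℝ)) := by
    intro n
    have hkpos : (0:ℝ) < ((2 ^ n : ℕ) : ℝ) := by positivity
    have h2 := Real.rpow_le_rpow (by positivity) (bound n) (by positivity :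
      (0:ℝ) ≤ (1:ℝ) / ((2 ^ n : ℕ) : ℝ))
    rwa [← Real.rpow_natCast (r / G) (2 ^ n), ← Real.rpow_mul (by positivity),
      mul_one_div, div_self hkpos.ne', Real.rpow_one] at h2
  -- Gelfand's formula
  have hfin : spectralRadius ℂ h ≠ ⊤ := by
    refine ne_top_of_le_ne_top ?_ (spectrum.spectralRadius_le_pow_nnnorm_pow_one_div ℂ h 0)
    exact ENNReal.mul_ne_top
      (ENNReal.rpow_ne_top_of_nonneg (by norm_num) ENNReal.coe_ne_top)
      (ENNReal.rpow_ne_top_of_nonneg (by norm_num) ENNReal.coe_ne_top)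
  have T1 : Tendsto (fun k : ℕ => ‖h ^ k‖ ^ ((1:ℝ) / (k:ℝ))) atTop (𝓝 R) := by
    have T0 := (ENNReal.tendsto_toReal hfin).comp
      (spectrum.pow_norm_pow_one_div_tendsto_nhds_spectralRadius h)
    convert T0 using 2 with k
    rw [Function.comp_apply, ENNReal.toReal_ofReal (by positivity)]
  have T2 : Tendsto (fun n : ℕ => ‖h ^ (2 ^ n)‖ ^ ((1:ℝ) / ((2 ^ n : ℕ) : ℝ)))
      atTop (𝓝 R) := T1.comp (tendsto_pow_atTop_atTop_of_one_lt (α := ℕ) one_lt_two)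
  have final : r / G ≤ R := ge_of_tendsto' T2 key_n
  calc r ≤ R * G := by rwa [div_le_iff₀ hGpos] at final
    _ = R * G := rfl
end

section
/- Let f, g be representable positive functionals on a *-algebra A with GNS data (H_A, π_A, ζ_A) and (H_B, π_B, ζ_B), and let M = {ζ ∈ H_B : ∃ sequence (a_n) in A with f(a_n* a_n) → 0 and π_B(a_n)ζ_B → ζ in H_B}. Then M is a closed π_B-invariant subspace of H_B, and its orthogonal complement M^⊥ is also π_B-invariant. -/
open scoped ComplexOrder InnerProductSpace
open Filter Topology

set_option linter.unusedSectionVars false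

/-- A linear functional on a `*`-algebra is *representable* if it is positive,
satisfies `|f a|² ≤ C · f (a⋆ a)` for some `C ≥ 0`, and satisfies the boundedness
condition `f (b⋆ x⋆ x b) ≤ λ_x · f (b⋆ b)` for every `x`. -/
def IsRepresentable {A : Type*} [Ring A] [StarRing A] [Algebra ℂ A] [StarModule ℂ A]
    (f : A →ₗ[ℂ] ℂ) : Prop :=
  (∀ a : A, 0 ≤ f (star a * a)) ∧
  (∃ C : ℝ, 0 ≤ C ∧ ∀ a : A, ‖f a‖ ^ 2 ≤ C * (f (star a * a)).re) ∧
  (∀ x : A, ∃ lam : ℝ, 0 ≤ lam ∧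
    ∀ b : A, (f (star (x * b) * (x * b))).re ≤ lam * (f (star b * b)).re)

/-- The subspace `M = {ζ ∈ H_B | ∃ (aₙ), f (aₙ⋆ aₙ) → 0 and B aₙ = π_B aₙ ζ_B → ζ}`. -/
def lebSet {A : Type*} [Ring A] [StarRing A] [Algebra ℂ A] [StarModule ℂ A]
    {HB : Type*} [NormedAddCommGroup HB] [InnerProductSpace ℂ HB] [CompleteSpace HB]
    (f : A →ₗ[ℂ] ℂ) (πB : A →ₗ[ℂ] (HB →L[ℂ] HB)) (ζB : HB) : Set HB :=
  {ζ : HB | ∃ a : ℕ → A,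
    Tendsto (fun n => f (star (a n) * a n)) atTop (nhds 0) ∧
    Tendsto (fun n => πB (a n) ζB) atTop (nhds ζ)}

variable {A : Type*} [Ring A] [StarRing A] [Algebra ℂ A] [StarModule ℂ A]
variable {HB : Type*} [NormedAddCommGroup HB] [InnerProductSpace ℂ HB] [CompleteSpace HB]

private lemma norm_eq_re_of_nonneg {z : ℂ} (h : 0 ≤ z) : ‖z‖ = z.re := by
  obtain ⟨hre, him⟩ := Complex.nonneg_iff.mp h
  rw [Complex.norm_def, Complex.normSq_apply, ← him]
  simpa using Real.sqrt_mul_self hre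

section Aux

variable {A : Type*} [Ring A] [StarRing A] [Algebra ℂ A] [StarModule ℂ A]

private lemma add_bound (f : A →ₗ[ℂ] ℂ) (hpos : ∀ a : A, 0 ≤ f (star a * a)) (x y : A) :
    ‖f (star (x + y) * (x + y))‖ ≤ 2 * ‖f (star x * x)‖ + 2 * ‖f (star y * y)‖ := by
  have key : star (x + y) * (x + y) + star (x - y) * (x - y)
      = (star x * x + star x * x) + (star y * y + star y * y) := by
    simp only [star_add, star_sub]; noncomm_ring
  have hsum : f (star (x + y) * (x + y)) + f (star (x - y) * (x - y))
      = (f (star x * x) + f (star x * x)) + (f (star y * y) + f (star y * y)) := by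
    simp only [← map_add]; rw [key]
  have h1 := hpos (x + y)
  have h2 := hpos (x - y)
  have h3 := hpos x
  have h4 := hpos y
  have hre := congrArg Complex.re hsum
  simp only [Complex.add_re] at hre
  rw [norm_eq_re_of_nonneg h1, norm_eq_re_of_nonneg h3, norm_eq_re_of_nonneg h4]
  have h2re : 0 ≤ (f (star (x - y) * (x - y))).re := (Complex.nonneg_iff.mp h2).1
  linarith

end Aux

/-- Let `f, g` be representable positive functionals on a `*`-algebra `A`, with `(H_B, π_B, ζ_B)`
the GNS triple of `g`. The set `M = {ζ | ∃ (aₙ), f (aₙ⋆ aₙ) → 0, π_B aₙ ζ_B → ζ}` is a closed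
`π_B`-invariant linear subspace of `H_B`, and `Mᗮ` is also `π_B`-invariant. -/
theorem lebSet_closed_invariant_submodule
    (f g : A →ₗ[ℂ] ℂ) (hf : IsRepresentable f) (hg : IsRepresentable g)
    (πB : A →ₗ[ℂ] (HB →L[ℂ] HB)) (ζB : HB)
    (hmul : ∀ x y : A, πB (x * y) = (πB x).comp (πB y))
    (hstar : ∀ (x : A) (u v : HB), ⟪u, πB x v⟫_ℂ = ⟪πB (star x) u, v⟫_ℂ)
    (hgns : ∀ a : A, g a = ⟪ζB, πB a ζB⟫_ℂ)
    (hcyc : Dense (Set.range fun a : A => πB a ζB)) :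
    ∃ M : Submodule ℂ HB,
      ((M : Set HB) = lebSet f πB ζB) ∧
      IsClosed (M : Set HB) ∧
      (∀ a : A, ∀ ζ ∈ M, πB a ζ ∈ M) ∧
      (∀ a : A, ∀ ζ ∈ Mᗮ, πB a ζ ∈ Mᗮ) := by
  obtain ⟨hpos, -, hbdd⟩ := hf
  set S := lebSet f πB ζB with hSdef
  -- zero
  have hzero : (0 : HB) ∈ S := by
    refine ⟨fun _ => 0, ?_, ?_⟩
    · simpa using (tendsto_const_nhds : Tendsto (fun _ : ℕ => (0:ℂ)) atTop (nhds 0))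
    · simpa using (tendsto_const_nhds : Tendsto (fun _ : ℕ => (0:HB)) atTop (nhds 0))
  -- addition
  have hadd : ∀ ζ η : HB, ζ ∈ S → η ∈ S → ζ + η ∈ S := by
    rintro ζ η ⟨a, ha1, ha2⟩ ⟨b, hb1, hb2⟩
    refine ⟨fun n => a n + b n, ?_, ?_⟩
    · rw [tendsto_zero_iff_norm_tendsto_zero]
      refine squeeze_zero (fun n => norm_nonneg _)
        (fun n => add_bound f hpos (a n) (b n)) ?_
      have := (ha1.norm.const_mul (2:ℝ)).add (hb1.norm.const_mul (2:ℝ))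
      simpa using this
    · have := ha2.add hb2
      simpa [map_add] using this
  -- scalar multiplication
  have hsmul : ∀ (c : ℂ) (ζ : HB), ζ ∈ S → c • ζ ∈ S := by
    rintro c ζ ⟨a, ha1, ha2⟩
    refine ⟨fun n => c • a n, ?_, ?_⟩
    · have heq : ∀ n, f (star (c • a n) * (c • a n))
          = (star c * c) * f (star (a n) * a n) := by
        intro n
        rw [star_smul, smul_mul_assoc, mul_smul_comm, smul_smul, map_smul, smul_eq_mul]
      simp only [heq]
      simpa using ha1.const_mul (star c * c)
    · have := ha2.const_smul c
      simpa [map_smul] using this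
  -- the submodule
  let M : Submodule ℂ HB :=
    { carrier := S
      zero_mem' := hzero
      add_mem' := fun {x y} hx hy => hadd x y hx hy
      smul_mem' := fun c {x} hx => hsmul c x hx }
  have hmem : ∀ z : HB, z ∈ M ↔ z ∈ S := fun _ => Iff.rfl
  -- closedness
  have hclosed : IsClosed S := by
    rw [← closure_subset_iff_isClosed]
    intro ζ hζ
    have key : ∀ n : ℕ, ∃ c : A,
        ‖f (star c * c)‖ < 1 / (n + 1) ∧ dist (πB c ζB) ζ < 2 / (n + 1) := by
      intro n
      have hn : (0:ℝ) < 1 / (n + 1) := by positivity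
      obtain ⟨η, hη, hdist⟩ := Metric.mem_closure_iff.mp hζ (1 / (n + 1)) hn
      obtain ⟨a, ha1, ha2⟩ := hη
      have e1 : ∀ᶠ k in atTop, ‖f (star (a k) * a k)‖ < 1 / (n + 1) :=
        NormedAddCommGroup.tendsto_nhds_zero.mp ha1 _ hn
      have e2 : ∀ᶠ k in atTop, dist (πB (a k) ζB) η < 1 / (n + 1) :=
        Metric.tendsto_nhds.mp ha2 _ hn
      obtain ⟨k, hk1, hk2⟩ := (e1.and e2).exists
      refine ⟨a k, hk1, ?_⟩
      have htri := dist_triangle (πB (a k) ζB) η ζ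
      have hζη : dist η ζ < 1 / (n + 1) := by rwa [dist_comm]
      have : (2:ℝ) / (n + 1) = 1 / (n + 1) + 1 / (n + 1) := by ring
      rw [this]
      linarith
    choose c hc1 hc2 using key
    refine ⟨c, ?_, ?_⟩
    · rw [tendsto_zero_iff_norm_tendsto_zero]
      exact squeeze_zero (fun n => norm_nonneg _) (fun n => (hc1 n).le)
        tendsto_one_div_add_atTop_nhds_zero_nat
    · rw [tendsto_iff_dist_tendsto_zero]
      refine squeeze_zero (fun n => dist_nonneg) (fun n => (hc2 n).le) ?_
      have := tendsto_one_div_add_atTop_nhds_zero_nat.const_mul (2:ℝ)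
      simpa [mul_one_div, div_eq_mul_inv] using this
  -- invariance of S
  have hinv : ∀ x : A, ∀ ζ : HB, ζ ∈ S → πB x ζ ∈ S := by
    rintro x ζ ⟨a, ha1, ha2⟩
    obtain ⟨lam, hlam0, hlam⟩ := hbdd x
    refine ⟨fun n => x * a n, ?_, ?_⟩
    · rw [tendsto_zero_iff_norm_tendsto_zero]
      refine squeeze_zero (g := fun n => lam * ‖f (star (a n) * a n)‖)
        (fun n => norm_nonneg _) (fun n => ?_) ?_
      · show ‖f (star (x * a n) * (x * a n))‖ ≤ lam * ‖f (star (a n) * a n)‖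
        rw [norm_eq_re_of_nonneg (hpos _), norm_eq_re_of_nonneg (hpos _)]
        exact hlam (a n)
      · simpa using ha1.norm.const_mul lam
    · have := ((πB x).continuous.tendsto ζ).comp ha2
      simpa [hmul, Function.comp_def] using this
  refine ⟨M, rfl, hclosed, fun x ζ hζ => hinv x ζ hζ, ?_⟩
  intro x ζ hζ
  rw [Submodule.mem_orthogonal] at hζ ⊢
  intro u hu
  rw [hstar x u ζ]
  exact hζ _ (hinv (star x) u hu)
end

section
/- Let g be a representable positive functional on a *-algebra A with GNS triple (H_B, π_B, ζ_B), and let M be a closed subspace of H_B invariant under π_B, with orthogonal projection P. Define g_a(a) = ⟨π_B(a)(I−P)ζ_B, (I−P)ζ_B⟩ and g_s(a) = ⟨π_B(a)Pζ_B, Pζ_B⟩. Then g_a and g_s are representable positive functionals and g = g_a + g_s. -/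
open scoped ComplexOrder InnerProductSpace
open Filter Topology

set_option linter.unusedSectionVars false

variable {A : Type*} [Ring A] [StarRing A] [Algebra ℂ A] [StarModule ℂ A]
variable {HB : Type*} [NormedAddCommGroup HB] [InnerProductSpace ℂ HB] [CompleteSpace HB]

/-- The vector state `a ↦ ⟪ξ, π a ξ⟫` as a linear functional. -/
noncomputable def vecState (πB : A →ₗ[ℂ] (HB →L[ℂ] HB)) (ξ : HB) : A →ₗ[ℂ] ℂ where
  toFun a := ⟪ξ, πB a ξ⟫_ℂ
  map_add' a b := by simp [inner_add_right]
  map_smul' c a := by simp [inner_smul_right]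

lemma vecState_sq (πB : A →ₗ[ℂ] (HB →L[ℂ] HB))
    (hmul : ∀ x y : A, πB (x * y) = (πB x).comp (πB y))
    (hstar : ∀ (x : A) (u v : HB), ⟪u, πB x v⟫_ℂ = ⟪πB (star x) u, v⟫_ℂ)
    (ξ : HB) (a : A) :
    ⟪ξ, πB (star a * a) ξ⟫_ℂ = (‖πB a ξ‖ : ℂ) ^ 2 := by
  rw [hmul]
  simp only [ContinuousLinearMap.comp_apply]
  rw [hstar (star a) ξ (πB a ξ), star_star]
  exact inner_self_eq_norm_sq_to_K _

lemma vecState_representable (πB : A →ₗ[ℂ] (HB →L[ℂ] HB))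
    (hmul : ∀ x y : A, πB (x * y) = (πB x).comp (πB y))
    (hstar : ∀ (x : A) (u v : HB), ⟪u, πB x v⟫_ℂ = ⟪πB (star x) u, v⟫_ℂ)
    (ξ : HB) : IsRepresentable (vecState πB ξ) := by
  refine ⟨fun a => ?_, ⟨‖ξ‖ ^ 2, by positivity, fun a => ?_⟩, fun x => ?_⟩
  · show (0 : ℂ) ≤ ⟪ξ, πB (star a * a) ξ⟫_ℂ
    rw [vecState_sq πB hmul hstar, ← Complex.ofReal_pow, Complex.zero_le_real]
    positivity
  · show ‖(⟪ξ, πB a ξ⟫_ℂ)‖ ^ 2 ≤ ‖ξ‖ ^ 2 * (⟪ξ, πB (star a * a) ξ⟫_ℂ).re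
    rw [vecState_sq πB hmul hstar, ← Complex.ofReal_pow, Complex.ofReal_re, ← mul_pow]
    have := norm_inner_le_norm (𝕜 := ℂ) ξ (πB a ξ)
    gcongr
  · refine ⟨‖πB x‖ ^ 2, by positivity, fun b => ?_⟩
    show (⟪ξ, πB (star (x * b) * (x * b)) ξ⟫_ℂ).re ≤
      ‖πB x‖ ^ 2 * (⟪ξ, πB (star b * b) ξ⟫_ℂ).re
    rw [vecState_sq πB hmul hstar, vecState_sq πB hmul hstar, ← Complex.ofReal_pow,
      ← Complex.ofReal_pow, Complex.ofReal_re, Complex.ofReal_re, hmul]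
    simp only [ContinuousLinearMap.comp_apply]
    rw [← mul_pow]
    gcongr
    exact (πB x).le_opNorm _

/-- Let `g` be a representable positive functional with GNS triple `(H_B, π_B, ζ_B)`, `M` a
closed `π_B`-invariant subspace with orthogonal projection `P`. Then
`g_a a = ⟨π_B a (I − P) ζ_B, (I − P) ζ_B⟩` and `g_s a = ⟨π_B a (P ζ_B), P ζ_B⟩` are
representable positive (linear) functionals with `g = g_a + g_s`. -/
theorem lebesgue_parts_representable_and_sum
    (g : A →ₗ[ℂ] ℂ) (hg : IsRepresentable g)
    (πB : A →ₗ[ℂ] (HB →L[ℂ] HB)) (ζB : HB)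
    (hmul : ∀ x y : A, πB (x * y) = (πB x).comp (πB y))
    (hstar : ∀ (x : A) (u v : HB), ⟪u, πB x v⟫_ℂ = ⟪πB (star x) u, v⟫_ℂ)
    (hgns : ∀ a : A, g a = ⟪ζB, πB a ζB⟫_ℂ)
    (hcyc : Dense (Set.range fun a : A => πB a ζB))
    (M : Submodule ℂ HB) (hMclosed : IsClosed (M : Set HB))
    (hinv : ∀ a : A, ∀ ζ ∈ M, πB a ζ ∈ M)
    (P : HB →L[ℂ] HB) (hP : ∀ ζ : HB, P ζ ∈ M ∧ ζ - P ζ ∈ Mᗮ) :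
    (∃ ga : A →ₗ[ℂ] ℂ, (∀ a : A, ga a = ⟪ζB - P ζB, πB a (ζB - P ζB)⟫_ℂ) ∧
      IsRepresentable ga) ∧
    (∃ gs : A →ₗ[ℂ] ℂ, (∀ a : A, gs a = ⟪P ζB, πB a (P ζB)⟫_ℂ) ∧
      IsRepresentable gs) ∧
    (∀ a : A, g a = ⟪ζB - P ζB, πB a (ζB - P ζB)⟫_ℂ + ⟪P ζB, πB a (P ζB)⟫_ℂ) := by
  refine ⟨⟨vecState πB (ζB - P ζB), fun a => rfl,
      vecState_representable πB hmul hstar _⟩,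
    ⟨vecState πB (P ζB), fun a => rfl, vecState_representable πB hmul hstar _⟩,
    fun a => ?_⟩
  set u := ζB - P ζB with hu
  set v := P ζB with hv
  have huM : u ∈ Mᗮ := (hP ζB).2
  have hvM : v ∈ M := (hP ζB).1
  have hζ : ζB = u + v := by rw [hu, hv]; abel
  have cross1 : ⟪u, πB a v⟫_ℂ = 0 := by
    rw [inner_eq_zero_symm]
    exact (Submodule.mem_orthogonal M u).1 huM _ (hinv a v hvM)
  have cross2 : ⟪v, πB a u⟫_ℂ = 0 := by
    rw [hstar]
    exact (Submodule.mem_orthogonal M u).1 huM _ (hinv (star a) v hvM)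
  rw [hgns, hζ]
  rw [map_add, inner_add_left, inner_add_right, inner_add_right, cross1, cross2]
  ring
end

section
/- Let f, g be representable positive functionals on a *-algebra A, with the decomposition g = g_a + g_s as in the Lebesgue decomposition (g_a(a) = ⟨π_B(a)(I−P)ζ_B,(I−P)ζ_B⟩ where P projects onto M). Then g_a is absolutely continuous with respect to f: for any sequence (a_n) in A, if f(a_n*a_n) → 0 and g_a((a_n−a_m)*(a_n−a_m)) → 0 (as n,m → ∞), then g_a(a_n*a_n) → 0. -/
open scoped ComplexOrder InnerProductSpace
open Filter Topology

set_option linter.unusedSectionVars false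

variable {A : Type*} [Ring A] [StarRing A] [Algebra ℂ A] [StarModule ℂ A]
variable {HB : Type*} [NormedAddCommGroup HB] [InnerProductSpace ℂ HB] [CompleteSpace HB]

/-- A sequence of nonnegative complex numbers whose real parts tend to `0` tends to `0`. -/
lemma aux_complex_tendsto_zero {ι : Type*} {l : Filter ι} {z : ι → ℂ}
    (hz : ∀ i, 0 ≤ z i) (h : Tendsto (fun i => (z i).re) l (𝓝 0)) :
    Tendsto z l (𝓝 0) := by
  have heq : ∀ i, z i = ((z i).re : ℂ) := by
    intro i
    have := (Complex.le_def.mp (hz i)).2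
    apply Complex.ext <;> simp [← this]
  have : Tendsto (fun i => (((z i).re : ℝ) : ℂ)) l (𝓝 ((0 : ℝ) : ℂ)) :=
    (Complex.continuous_ofReal.tendsto 0).comp h
  simpa [← heq] using this

lemma aux_re_tendsto_zero {ι : Type*} {l : Filter ι} {z : ι → ℂ}
    (h : Tendsto z l (𝓝 0)) : Tendsto (fun i => (z i).re) l (𝓝 0) := by
  simpa [Function.comp_def] using (Complex.continuous_re.tendsto 0).comp h

/-- The absolutely continuous part `g_a a = ⟨π_B a (I − P) ζ_B, (I − P) ζ_B⟩` of the Lebesgue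
decomposition of `g` with respect to `f` is `f`-absolutely continuous: if `f (aₙ⋆ aₙ) → 0` and
`g_a ((aₙ − a_m)⋆ (aₙ − a_m)) → 0` (as `n, m → ∞`), then `g_a (aₙ⋆ aₙ) → 0`. -/
theorem absolutely_continuous_part_is_absolutely_continuous
    (f g : A →ₗ[ℂ] ℂ) (hf : IsRepresentable f) (hg : IsRepresentable g)
    (πB : A →ₗ[ℂ] (HB →L[ℂ] HB)) (ζB : HB)
    (hmul : ∀ x y : A, πB (x * y) = (πB x).comp (πB y))
    (hstar : ∀ (x : A) (u v : HB), ⟪u, πB x v⟫_ℂ = ⟪πB (star x) u, v⟫_ℂ)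
    (hgns : ∀ a : A, g a = ⟪ζB, πB a ζB⟫_ℂ)
    (hcyc : Dense (Set.range fun a : A => πB a ζB))
    (M : Submodule ℂ HB) (hM : (M : Set HB) = lebSet f πB ζB)
    (P : HB →L[ℂ] HB) (hP : ∀ ζ : HB, P ζ ∈ M ∧ ζ - P ζ ∈ Mᗮ) :
    ∀ a : ℕ → A,
      Tendsto (fun n => f (star (a n) * a n)) atTop (nhds 0) →
      Tendsto (fun p : ℕ × ℕ =>
          ⟪ζB - P ζB, πB (star (a p.1 - a p.2) * (a p.1 - a p.2)) (ζB - P ζB)⟫_ℂ)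
        (atTop ×ˢ atTop) (nhds 0) →
      Tendsto (fun n => ⟪ζB - P ζB, πB (star (a n) * a n) (ζB - P ζB)⟫_ℂ)
        atTop (nhds 0) := by
  obtain ⟨hfpos, -, hfbound⟩ := hf
  intro a hfa hgcauchy
  set ξ : HB := ζB - P ζB with hξdef
  -- basic positivity facts for f
  have hfre : ∀ b : A, 0 ≤ (f (star b * b)).re := fun b => by
    simpa using (Complex.le_def.mp (hfpos b)).1
  -- `⟪v, πB (star b * b) v⟫ = ‖πB b v‖²`
  have hnormsq : ∀ (b : A) (v : HB),
      ⟪v, πB (star b * b) v⟫_ℂ = ((‖πB b v‖ : ℂ)) ^ 2 := by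
    intro b v
    rw [hmul]
    simp only [ContinuousLinearMap.comp_apply]
    rw [hstar (star b) v (πB b v), star_star]
    exact inner_self_eq_norm_sq_to_K _
  -- the leb set is invariant under every πB x
  have hMinv : ∀ (x : A) (ζ : HB), ζ ∈ lebSet f πB ζB → πB x ζ ∈ lebSet f πB ζB := by
    rintro x ζ ⟨b, hb1, hb2⟩
    obtain ⟨lam, hlam0, hlam⟩ := hfbound x
    refine ⟨fun n => x * b n, ?_, ?_⟩
    · refine aux_complex_tendsto_zero (fun n => hfpos _) ?_
      refine squeeze_zero (fun n => hfre _) (fun n => hlam (b n)) ?_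
      have := (aux_re_tendsto_zero hb1).const_mul lam
      simpa using this
    · have := ((πB x).continuous.tendsto ζ).comp hb2
      simp only [hmul, ContinuousLinearMap.comp_apply]
      exact this
  have hMinv' : ∀ (x : A) (ζ : HB), ζ ∈ M → πB x ζ ∈ M := by
    intro x ζ hζ
    have : ζ ∈ (M : Set HB) := hζ
    rw [hM] at this
    have : πB x ζ ∈ lebSet f πB ζB := hMinv x ζ this
    rw [← hM] at this
    exact this
  -- Mᗮ is invariant under every πB x
  have hMperp : ∀ (x : A) (ζ : HB), ζ ∈ Mᗮ → πB x ζ ∈ Mᗮ := by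
    intro x ζ hζ
    rw [Submodule.mem_orthogonal]
    intro u hu
    rw [hstar]
    exact (Submodule.mem_orthogonal _ _).mp hζ _ (hMinv' (star x) u hu)
  have hξperp : ξ ∈ Mᗮ := (hP ζB).2
  -- the sequence u n = πB (a n) ξ is Cauchy
  set u : ℕ → HB := fun n => πB (a n) ξ with hudef
  have hucauchy : CauchySeq u := by
    rw [cauchySeq_iff_tendsto_dist_atTop_0]
    have h1 : Tendsto (fun p : ℕ × ℕ => ((‖u p.1 - u p.2‖ : ℂ)) ^ 2)
        (atTop ×ˢ atTop) (𝓝 0) := by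
      have : ∀ p : ℕ × ℕ,
          ⟪ξ, πB (star (a p.1 - a p.2) * (a p.1 - a p.2)) ξ⟫_ℂ
            = ((‖u p.1 - u p.2‖ : ℂ)) ^ 2 := by
        intro p
        rw [hnormsq]
        simp [hudef, map_sub]
      simpa only [this] using hgcauchy
    have h2 : Tendsto (fun p : ℕ × ℕ => ‖u p.1 - u p.2‖ ^ 2) (atTop ×ˢ atTop) (𝓝 0) := by
      have := aux_re_tendsto_zero h1
      simpa [← Complex.ofReal_pow] using this
    have h3 : Tendsto (fun p : ℕ × ℕ => ‖u p.1 - u p.2‖) (atTop ×ˢ atTop) (𝓝 0) := by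
      have := (Real.continuous_sqrt.tendsto 0).comp h2
      simp only [Real.sqrt_zero] at this
      refine this.congr fun p => ?_
      simp [Function.comp, Real.sqrt_sq_eq_abs, abs_of_nonneg (norm_nonneg _)]
    rw [← Filter.prod_atTop_atTop_eq]
    simpa [dist_eq_norm] using h3
  obtain ⟨η, hη⟩ := cauchySeq_tendsto_of_complete hucauchy
  -- η ∈ Mᗮ
  have hηperp : η ∈ Mᗮ := by
    have hcl : IsClosed (Mᗮ : Set HB) := Submodule.isClosed_orthogonal M
    exact hcl.mem_of_tendsto hη (Filter.Eventually.of_forall fun n => hMperp (a n) ξ hξperp)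
  -- η ∈ M (via the diagonal construction)
  have hPζ : P ζB ∈ lebSet f πB ζB := by
    have : P ζB ∈ (M : Set HB) := (hP ζB).1
    rwa [hM] at this
  obtain ⟨d, hd1, hd2⟩ := hPζ
  -- for each n, choose k n approximating πB (a n) (P ζB) with small f-value
  have hchoice : ∀ n : ℕ, ∃ k : ℕ,
      ‖πB (a n * d k) ζB - πB (a n) (P ζB)‖ < 1 / (n + 1) ∧
      (f (star (a n * d k) * (a n * d k))).re < 1 / (n + 1) := by
    intro n
    have hpos : (0 : ℝ) < 1 / (n + 1) := by positivity
    have happrox : Tendsto (fun k => πB (a n * d k) ζB) atTop (𝓝 (πB (a n) (P ζB))) := by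
      have := ((πB (a n)).continuous.tendsto (P ζB)).comp hd2
      simp only [hmul, ContinuousLinearMap.comp_apply]
      exact this
    have h1 : ∀ᶠ k in atTop, ‖πB (a n * d k) ζB - πB (a n) (P ζB)‖ < 1 / (n + 1) := by
      have := tendsto_iff_norm_sub_tendsto_zero.mp happrox
      exact this.eventually_lt_const hpos
    obtain ⟨lam, hlam0, hlam⟩ := hfbound (a n)
    have h2 : ∀ᶠ k in atTop, (f (star (a n * d k) * (a n * d k))).re < 1 / (n + 1) := by
      have hto : Tendsto (fun k => (f (star (a n * d k) * (a n * d k))).re) atTop (𝓝 0) := by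
        refine squeeze_zero (fun k => hfre _) (fun k => hlam (d k)) ?_
        have := (aux_re_tendsto_zero hd1).const_mul lam
        simpa using this
      exact hto.eventually_lt_const hpos
    exact (h1.and h2).exists
  choose k hk1 hk2 using hchoice
  set c : ℕ → A := fun n => a n - a n * d (k n) with hcdef
  -- parallelogram-type estimate
  have hpar : ∀ x y : A,
      (f (star (x - y) * (x - y))).re ≤ 2 * (f (star x * x)).re + 2 * (f (star y * y)).re := by
    intro x y
    have key : f (star (x - y) * (x - y)) + f (star (x + y) * (x + y))
        = f (star x * x) + f (star x * x) + (f (star y * y) + f (star y * y)) := by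
      rw [← map_add, ← map_add, ← map_add, ← map_add]
      congr 1
      simp only [star_sub, star_add]
      noncomm_ring
    have hre := congrArg Complex.re key
    simp only [Complex.add_re] at hre
    have := hfre (x + y)
    nlinarith [hfre (x - y), hfre x, hfre y]
  -- η ∈ M
  have hηM : η ∈ M := by
    have : η ∈ lebSet f πB ζB := by
      refine ⟨c, ?_, ?_⟩
      · refine aux_complex_tendsto_zero (fun n => hfpos _) ?_
        have hbound : ∀ n, (f (star (c n) * c n)).re
            ≤ 2 * (f (star (a n) * a n)).re + 2 * (1 / ((n : ℝ) + 1)) := by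
          intro n
          refine le_trans (hpar (a n) (a n * d (k n))) ?_
          have h2 := hk2 n
          nlinarith
        refine squeeze_zero (fun n => hfre _) hbound ?_
        have h1 : Tendsto (fun n : ℕ => 2 * (f (star (a n) * a n)).re) atTop (𝓝 0) := by
          have := (aux_re_tendsto_zero hfa).const_mul 2
          simpa using this
        have h2 : Tendsto (fun n : ℕ => 2 * (1 / ((n : ℝ) + 1))) atTop (𝓝 0) := by
          have := (tendsto_one_div_add_atTop_nhds_zero_nat :
            Tendsto (fun n : ℕ => 1 / ((n : ℝ) + 1)) atTop (𝓝 0)).const_mul 2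
          simpa using this
        simpa using h1.add h2
      · -- πB (c n) ζB = u n + (πB (a n) (P ζB) - πB (a n * d (k n)) ζB)
        have heq : ∀ n, πB (c n) ζB
            = u n + (πB (a n) (P ζB) - πB (a n * d (k n)) ζB) := by
          intro n
          simp only [hcdef, map_sub, ContinuousLinearMap.sub_apply, hudef, hξdef, map_sub]
          abel
        have herr : Tendsto (fun n => πB (a n) (P ζB) - πB (a n * d (k n)) ζB) atTop (𝓝 0) := by
          apply squeeze_zero_norm (a := fun n : ℕ => 1 / ((n : ℝ) + 1))
          · intro n
            rw [norm_sub_rev]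
            exact (hk1 n).le
          · exact tendsto_one_div_add_atTop_nhds_zero_nat
        have := hη.add herr
        rw [add_zero] at this
        exact this.congr fun n => (heq n).symm
    rw [← hM] at this
    exact this
  -- η = 0
  have hη0 : η = 0 := by
    have : ⟪η, η⟫_ℂ = 0 := (Submodule.mem_orthogonal _ _).mp hηperp η hηM
    exact inner_self_eq_zero.mp this
  -- conclude
  have hnorm : Tendsto (fun n => ‖u n‖) atTop (𝓝 0) := by
    have := hη.norm
    rwa [hη0, norm_zero] at this
  have : Tendsto (fun n => ((‖u n‖ : ℂ)) ^ 2) atTop (𝓝 0) := by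
    have h1 : Tendsto (fun n => ((‖u n‖ : ℂ))) atTop (𝓝 0) := by
      have := (Complex.continuous_ofReal.tendsto 0).comp hnorm
      simpa [Function.comp_def] using this
    simpa using h1.pow 2
  simpa [hnormsq] using this
end

section
/- Let f, g be representable positive functionals on a *-algebra A. If h is a representable positive functional with h ≤ g (i.e., h(a*a) ≤ g(a*a) for all a) and h is f-absolutely continuous, then the Riesz representing vector ζ_h ∈ H_B with h(a) = ⟨Ba, ζ_h⟩ lies in M^⊥, where M = {ζ ∈ H_B : ∃ (a_n), f(a_n*a_n) → 0, Ba_n → ζ}. -/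
open scoped ComplexOrder InnerProductSpace
open Filter Topology

set_option linter.unusedSectionVars false

variable {A : Type*} [Ring A] [StarRing A] [Algebra ℂ A] [StarModule ℂ A]
variable {HB : Type*} [NormedAddCommGroup HB] [InnerProductSpace ℂ HB] [CompleteSpace HB]

/-- If `h` is representable, `h ≤ g`, and `h` is `f`-absolutely continuous, then the Riesz
representing vector `ζ_h ∈ H_B` with `h a = ⟨B a, ζ_h⟩` lies in `Mᗮ`, where
`M = {ζ | ∃ (aₙ), f (aₙ⋆ aₙ) → 0, B aₙ → ζ}` and `B a = π_B a ζ_B`. -/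
theorem riesz_vector_mem_orthogonal
    (f g : A →ₗ[ℂ] ℂ) (hf : IsRepresentable f) (hg : IsRepresentable g)
    (πB : A →ₗ[ℂ] (HB →L[ℂ] HB)) (ζB : HB)
    (hmul : ∀ x y : A, πB (x * y) = (πB x).comp (πB y))
    (hstar : ∀ (x : A) (u v : HB), ⟪u, πB x v⟫_ℂ = ⟪πB (star x) u, v⟫_ℂ)
    (hgns : ∀ a : A, g a = ⟪ζB, πB a ζB⟫_ℂ)
    (hcyc : Dense (Set.range fun a : A => πB a ζB))
    (h : A →ₗ[ℂ] ℂ) (hh : IsRepresentable h)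
    (hle : ∀ a : A, h (star a * a) ≤ g (star a * a))
    (habs : ∀ a : ℕ → A,
      Tendsto (fun n => f (star (a n) * a n)) atTop (nhds 0) →
      Tendsto (fun p : ℕ × ℕ => h (star (a p.1 - a p.2) * (a p.1 - a p.2)))
        (atTop ×ˢ atTop) (nhds 0) →
      Tendsto (fun n => h (star (a n) * a n)) atTop (nhds 0))
    (ζh : HB) (hζh : ∀ a : A, h a = ⟪ζh, πB a ζB⟫_ℂ) :
    ∀ ζ ∈ lebSet f πB ζB, ⟪ζ, ζh⟫_ℂ = 0 := by
  intro ζ hζ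
  obtain ⟨a, hfa, hBa⟩ := hζ
  -- inner product formula: ⟪B x, B y⟫ = g (star x * y)
  have key : ∀ x y : A, ⟪πB x ζB, πB y ζB⟫_ℂ = g (star x * y) := by
    intro x y
    rw [hgns, hmul]
    simp only [ContinuousLinearMap.comp_apply]
    rw [hstar (star x) ζB (πB y ζB), star_star]
  -- B (a n) is Cauchy
  have hdiff : Tendsto (fun p : ℕ × ℕ => πB (a p.1 - a p.2) ζB) (atTop ×ˢ atTop) (nhds 0) := by
    have h1 : Tendsto (fun p : ℕ × ℕ => πB (a p.1) ζB - πB (a p.2) ζB)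
        (atTop ×ˢ atTop) (nhds (ζ - ζ)) :=
      (hBa.comp tendsto_fst).sub (hBa.comp tendsto_snd)
    rw [sub_self] at h1
    refine h1.congr fun p => ?_
    simp [map_sub]
  have hgd : Tendsto (fun p : ℕ × ℕ => g (star (a p.1 - a p.2) * (a p.1 - a p.2)))
      (atTop ×ˢ atTop) (nhds 0) := by
    have : Tendsto (fun p : ℕ × ℕ =>
        (⟪πB (a p.1 - a p.2) ζB, πB (a p.1 - a p.2) ζB⟫_ℂ)) (atTop ×ˢ atTop)
        (nhds (⟪(0 : HB), (0 : HB)⟫_ℂ)) := hdiff.inner hdiff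
    simp only [inner_zero_right] at this
    refine this.congr fun p => key _ _
  -- h of the differences tends to 0 by squeezing
  have hhd : Tendsto (fun p : ℕ × ℕ => h (star (a p.1 - a p.2) * (a p.1 - a p.2)))
      (atTop ×ˢ atTop) (nhds 0) := by
    obtain ⟨hpos, _, _⟩ := hh
    have hre : Tendsto (fun p : ℕ × ℕ =>
        (h (star (a p.1 - a p.2) * (a p.1 - a p.2))).re) (atTop ×ˢ atTop) (nhds 0) := by
      have hgre : Tendsto (fun p : ℕ × ℕ =>
          (g (star (a p.1 - a p.2) * (a p.1 - a p.2))).re) (atTop ×ˢ atTop) (nhds 0) := by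
        have := (Complex.continuous_re.tendsto 0).comp hgd
        simpa [Function.comp_def] using this
      refine tendsto_of_tendsto_of_tendsto_of_le_of_le tendsto_const_nhds hgre
        (fun p => ?_) (fun p => ?_)
      · exact (Complex.le_def.mp (hpos _)).1
      · exact (Complex.le_def.mp (hle _)).1
    have him : ∀ p : ℕ × ℕ, h (star (a p.1 - a p.2) * (a p.1 - a p.2)) =
        ((h (star (a p.1 - a p.2) * (a p.1 - a p.2))).re : ℂ) := by
      intro p
      have h2 := (Complex.le_def.mp (hpos (a p.1 - a p.2))).2
      rw [Complex.ext_iff]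
      exact ⟨by simp, by simp only [Complex.ofReal_im]; exact h2.symm⟩
    have := (Complex.continuous_ofReal.tendsto 0).comp hre
    simp only [Function.comp, Complex.ofReal_zero] at this
    exact this.congr fun p => (him p).symm
  -- by absolute continuity, h (aₙ⋆ aₙ) → 0
  have hmain : Tendsto (fun n => h (star (a n) * a n)) atTop (nhds 0) := habs a hfa hhd
  -- hence h (aₙ) → 0
  have hhan : Tendsto (fun n => h (a n)) atTop (nhds 0) := by
    obtain ⟨hpos, ⟨C, hC0, hC⟩, _⟩ := hh
    rw [tendsto_zero_iff_norm_tendsto_zero]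
    have hsq : Tendsto (fun n => ‖h (a n)‖ ^ 2) atTop (nhds 0) := by
      have hre : Tendsto (fun n => C * (h (star (a n) * a n)).re) atTop (nhds 0) := by
        have := ((Complex.continuous_re.tendsto 0).comp hmain).const_mul C
        simpa using this
      refine tendsto_of_tendsto_of_tendsto_of_le_of_le tendsto_const_nhds hre
        (fun n => sq_nonneg _) (fun n => hC (a n))
    have := (Real.continuous_sqrt.tendsto 0).comp hsq
    simp only [Function.comp, Real.sqrt_zero] at this
    refine this.congr fun n => ?_
    simp only [Function.comp_apply]
    exact Real.sqrt_sq (norm_nonneg _)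
  -- conclude
  have h1 : Tendsto (fun n => ⟪πB (a n) ζB, ζh⟫_ℂ) atTop (nhds (⟪ζ, ζh⟫_ℂ)) :=
    hBa.inner tendsto_const_nhds
  have h2 : Tendsto (fun n => ⟪πB (a n) ζB, ζh⟫_ℂ) atTop (nhds 0) := by
    have : Tendsto (fun n => (starRingEnd ℂ) (h (a n))) atTop (nhds 0) := by
      have := (Complex.continuous_conj.tendsto 0).comp hhan
      simpa [Function.comp_def] using this
    refine this.congr fun n => ?_
    rw [hζh, ← inner_conj_symm, Complex.conj_conj]
  exact tendsto_nhds_unique h1 h2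
end

section
/- Let g be a representable positive functional on a *-algebra A with GNS triple (H_B, π_B, ζ_B), and let h be a representable positive functional with h ≤ g, with Riesz vector ζ_h ∈ H_B satisfying h(a) = ⟨Ba, ζ_h⟩ for all a. Then ‖π_B(a)ζ_h‖² ≤ h(a*a) for every a ∈ A. -/
open scoped ComplexOrder InnerProductSpace
open Filter Topology

set_option linter.unusedSectionVars false

variable {A : Type*} [Ring A] [StarRing A] [Algebra ℂ A] [StarModule ℂ A]
variable {HB : Type*} [NormedAddCommGroup HB] [InnerProductSpace ℂ HB] [CompleteSpace HB]

/-- A positive functional on a star algebra is hermitian. -/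
lemma herm_aux (f : A →ₗ[ℂ] ℂ) (hf : ∀ a : A, 0 ≤ f (star a * a)) (x y : A) :
    (starRingEnd ℂ) (f (star x * y)) = f (star y * x) := by
  have real : ∀ z : A, (starRingEnd ℂ) (f (star z * z)) = f (star z * z) := by
    intro z
    have hz := hf z
    rw [Complex.le_def] at hz
    rw [Complex.conj_eq_iff_im]
    simpa using hz.2.symm
  have e1 : f (star (x + y) * (x + y))
      = f (star x * x) + f (star x * y) + f (star y * x) + f (star y * y) := by
    simp only [star_add, add_mul, mul_add, map_add]
    ring
  have e2 : f (star (x + Complex.I • y) * (x + Complex.I • y))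
      = f (star x * x) + Complex.I * f (star x * y) - Complex.I * f (star y * x)
        + f (star y * y) := by
    simp only [star_add, star_smul, Complex.star_def, Complex.conj_I, add_mul, mul_add,
      smul_mul_assoc, mul_smul_comm, map_add, map_smul, smul_smul, neg_smul, map_neg,
      smul_eq_mul, neg_mul, neg_neg, one_mul, one_smul]
    linear_combination (-f (star y * y)) * Complex.I_sq
  have r1 := real (x + y)
  have r2 := real (x + Complex.I • y)
  rw [e1] at r1
  rw [e2] at r2
  simp only [map_add, map_sub, map_mul, Complex.conj_I, real x, real y, neg_mul] at r1 r2
  linear_combination r1 / 2 + Complex.I * r2 / 2 +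
    ((f (star x * y) + (starRingEnd ℂ) (f (star x * y)) - f (star y * x)
      - (starRingEnd ℂ) (f (star y * x))) / 2) * Complex.I_sq

/-- Cauchy–Schwarz for a positive functional. -/
lemma cs_aux (f : A →ₗ[ℂ] ℂ) (hf : ∀ a : A, 0 ≤ f (star a * a)) (x y : A) :
    ‖f (star x * y)‖ ^ 2 ≤ (f (star x * x)).re * (f (star y * y)).re := by
  letI c : PreInnerProductSpace.Core ℂ A :=
    { inner := fun u v => f (star u * v)
      conj_inner_symm := fun u v => herm_aux f hf v u
      re_inner_nonneg := fun u => by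
        have := hf u
        rw [Complex.le_def] at this
        simpa using this.1
      add_left := fun u v w => by simp [star_add, add_mul]
      smul_left := fun u v r => by
        simp [star_smul, smul_mul_assoc, Complex.star_def] }
  have key := @InnerProductSpace.Core.inner_mul_inner_self_le ℂ A _ _ _ c x y
  have hsym : ‖(@inner ℂ A c.toInner y x)‖ = ‖(@inner ℂ A c.toInner x y)‖ := by
    have : (@inner ℂ A c.toInner y x) = (starRingEnd ℂ) (@inner ℂ A c.toInner x y) := by
      exact (herm_aux f hf x y).symm
    rw [this, RCLike.norm_conj]
  rw [hsym] at key
  have : (@inner ℂ A c.toInner x y) = f (star x * y) := rfl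
  rw [this] at key
  calc ‖f (star x * y)‖ ^ 2 = ‖f (star x * y)‖ * ‖f (star x * y)‖ := sq ..
    _ ≤ _ := key

/-- If `h` is a representable positive functional with `h ≤ g`, and `ζ_h ∈ H_B` is its Riesz
vector with `h a = ⟨B a, ζ_h⟩` (`B a = π_B a ζ_B`), then `‖π_B a ζ_h‖² ≤ h (a⋆ a)` for all `a`. -/
theorem norm_sq_pi_riesz_vector_le
    (g : A →ₗ[ℂ] ℂ) (hg : IsRepresentable g)
    (πB : A →ₗ[ℂ] (HB →L[ℂ] HB)) (ζB : HB)
    (hmul : ∀ x y : A, πB (x * y) = (πB x).comp (πB y))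
    (hstar : ∀ (x : A) (u v : HB), ⟪u, πB x v⟫_ℂ = ⟪πB (star x) u, v⟫_ℂ)
    (hgns : ∀ a : A, g a = ⟪ζB, πB a ζB⟫_ℂ)
    (hcyc : Dense (Set.range fun a : A => πB a ζB))
    (h : A →ₗ[ℂ] ℂ) (hh : IsRepresentable h)
    (hle : ∀ a : A, h (star a * a) ≤ g (star a * a))
    (ζh : HB) (hζh : ∀ a : A, h a = ⟪ζh, πB a ζB⟫_ℂ) :
    ∀ a : A, ‖πB a ζh‖ ^ 2 ≤ (h (star a * a)).re := by
  intro a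
  set v := πB a ζh with hv
  set K := (h (star a * a)).re with hK
  have hK0 : 0 ≤ K := by
    have := hh.1 a
    rw [Complex.le_def] at this
    simpa [hK] using this.1
  -- inner product of v with Bx
  have key : ∀ x : A, ⟪v, πB x ζB⟫_ℂ = h (star a * x) := by
    intro x
    have h1 : ⟪v, πB x ζB⟫_ℂ = ⟪ζh, πB (star a) (πB x ζB)⟫_ℂ := by
      rw [hstar (star a) ζh (πB x ζB), star_star]
    rw [h1]
    have h2 : πB (star a) (πB x ζB) = πB (star a * x) ζB := by
      rw [hmul (star a) x]; rfl
    rw [h2, ← hζh]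
  -- norm of Bx
  have gnorm : ∀ x : A, (g (star x * x)).re = ‖πB x ζB‖ ^ 2 := by
    intro x
    have h1 : g (star x * x) = ⟪πB x ζB, πB x ζB⟫_ℂ := by
      rw [hgns, hmul]
      show ⟪ζB, πB (star x) (πB x ζB)⟫_ℂ = _
      rw [hstar (star x) ζB (πB x ζB), star_star]
    rw [h1, inner_self_eq_norm_sq_to_K]
    simp [← Complex.ofReal_pow]
  -- the bound against each Bx
  have bound : ∀ x : A, ‖⟪v, πB x ζB⟫_ℂ‖ ≤ Real.sqrt K * ‖πB x ζB‖ := by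
    intro x
    rw [key x]
    have hcs := cs_aux h hh.1 a x
    have hle' : (h (star x * x)).re ≤ (g (star x * x)).re := by
      have := hle x
      rw [Complex.le_def] at this
      exact this.1
    have h2 : ‖h (star a * x)‖ ^ 2 ≤ K * ‖πB x ζB‖ ^ 2 := by
      calc ‖h (star a * x)‖ ^ 2 ≤ K * (h (star x * x)).re := hcs
        _ ≤ K * (g (star x * x)).re := by
            apply mul_le_mul_of_nonneg_left hle' hK0
        _ = K * ‖πB x ζB‖ ^ 2 := by rw [gnorm x]
    have h3 : (Real.sqrt K * ‖πB x ζB‖) ^ 2 = K * ‖πB x ζB‖ ^ 2 := by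
      rw [mul_pow, Real.sq_sqrt hK0]
    have h4 : ‖h (star a * x)‖ ^ 2 ≤ (Real.sqrt K * ‖πB x ζB‖) ^ 2 := by
      rw [h3]; exact h2
    have h5 : 0 ≤ Real.sqrt K * ‖πB x ζB‖ := by positivity
    have h6 := Real.sqrt_le_sqrt h4
    rwa [Real.sqrt_sq (norm_nonneg _), Real.sqrt_sq h5] at h6
  -- extend the bound to all of HB by density
  have bound' : ∀ w : HB, ‖⟪v, w⟫_ℂ‖ ≤ Real.sqrt K * ‖w‖ := by
    intro w
    have hclosed : IsClosed {w : HB | ‖⟪v, w⟫_ℂ‖ ≤ Real.sqrt K * ‖w‖} := by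
      apply isClosed_le
      · exact Continuous.norm (Continuous.inner continuous_const continuous_id)
      · exact Continuous.mul continuous_const continuous_norm
    have hsub : Set.range (fun x : A => πB x ζB) ⊆
        {w : HB | ‖⟪v, w⟫_ℂ‖ ≤ Real.sqrt K * ‖w‖} := by
      rintro _ ⟨x, rfl⟩
      exact bound x
    have : closure (Set.range fun x : A => πB x ζB) ⊆
        {w : HB | ‖⟪v, w⟫_ℂ‖ ≤ Real.sqrt K * ‖w‖} :=
      closure_minimal hsub hclosed
    exact this (by rw [hcyc.closure_eq]; trivial)
  -- apply to w = v
  have hvv := bound' v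
  rw [inner_self_eq_norm_sq_to_K] at hvv
  have hvv' : ‖v‖ ^ 2 ≤ Real.sqrt K * ‖v‖ := by
    calc ‖v‖ ^ 2 = ‖((‖v‖ : ℂ)) ^ 2‖ := by
          rw [← Complex.ofReal_pow]
          simp [abs_of_nonneg (sq_nonneg ‖v‖)]
      _ ≤ Real.sqrt K * ‖v‖ := hvv
  nlinarith [sq_nonneg (‖v‖ - Real.sqrt K), Real.sq_sqrt hK0, norm_nonneg v,
    Real.sqrt_nonneg K]
end
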